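/- Let a > 1, let h, d be positive integers with gcd(a, d) = 1, and let A = (a², ha²+d, ha²+ad, ha²+(a+1)d). Then g(A) = ha³ + (d−h−1)a² − d. -/

import Mathlib

/-- `m` is representable by the sequence `A`. -/
def IsRepresentable {n : ℕ} (A : Fin n → ℕ) (m : ℕ) : Prop :=
  ∃ x : Fin n → ℕ, m = ∑ i, A i * x i

/-- For `A = (a², ha²+d, ha²+ad, ha²+(a+1)d)` with `a > 1`, `h, d ≥ 1` and
`gcd(a, d) = 1`: `g(A) = ha³ + (d-h-1)a² - d`. -/
theorem stmt_13 (a h d : ℕ) (ha : 1 < a) (hh : 0 < h) (hd : 0 < d)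
    (had : Nat.gcd a d = 1)
    (g : ℕ)
    (hg : IsGreatest {m : ℕ | ¬ IsRepresentable
      ![a ^ 2, h * a ^ 2 + d, h * a ^ 2 + a * d, h * a ^ 2 + (a + 1) * d] m} g) :
    (g : ℤ) = h * a ^ 3 + ((d : ℤ) - h - 1) * a ^ 2 - d := by
  obtain ⟨b, rfl⟩ : ∃ b, a = b + 1 := ⟨a - 1, by omega⟩
  set a := b + 1 with hadef
  have hb1 : 1 ≤ b := by omega
  have ha0 : 0 < a := by omega
  have hA2 : 0 < a ^ 2 := by positivity
  obtain ⟨N, hN⟩ : ∃ N, a ^ 2 = N + 1 := ⟨a ^ 2 - 1, by omega⟩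
  obtain ⟨M, hM⟩ : ∃ M, h * b = M + 1 :=
    ⟨h * b - 1, by have := Nat.mul_le_mul hh hb1; omega⟩
  have hab : (a + 1) * b + 1 = a ^ 2 := by rw [hadef]; ring
  have hcop : Nat.Coprime d (a ^ 2) := (Nat.Coprime.pow_left 2 had).symm
  set Fn := a ^ 2 * M + d * N with hFn
  -- reformulation of representability
  have hrep : ∀ m : ℕ, IsRepresentable
      ![a ^ 2, h * a ^ 2 + d, h * a ^ 2 + a * d, h * a ^ 2 + (a + 1) * d] m ↔
      ∃ x0 x1 x2 x3 : ℕ,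
        m = a ^ 2 * (x0 + h * (x1 + x2 + x3)) + d * (x1 + a * x2 + (a + 1) * x3) := by
    intro m
    constructor
    · rintro ⟨x, hx⟩
      refine ⟨x 0, x 1, x 2, x 3, ?_⟩
      rw [Fin.sum_univ_four] at hx
      simp only [Matrix.cons_val_zero, Matrix.cons_val_one, Matrix.head_cons,
        Matrix.cons_val_two, Matrix.tail_cons, Matrix.cons_val_three] at hx
      rw [hx]; ring
    · rintro ⟨x0, x1, x2, x3, hx⟩
      refine ⟨![x0, x1, x2, x3], ?_⟩
      rw [Fin.sum_univ_four]
      simp only [Matrix.cons_val_zero, Matrix.cons_val_one, Matrix.head_cons,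
        Matrix.cons_val_two, Matrix.tail_cons, Matrix.cons_val_three]
      rw [hx]; ring
  -- Part A: Fn is not representable
  have partA : ¬ IsRepresentable
      ![a ^ 2, h * a ^ 2 + d, h * a ^ 2 + a * d, h * a ^ 2 + (a + 1) * d] Fn := by
    rw [hrep]
    rintro ⟨x0, x1, x2, x3, hx⟩
    set C := x1 + x2 + x3 with hC
    set t := x1 + a * x2 + (a + 1) * x3 with ht
    have htC : t ≤ (a + 1) * C := by
      have key : (a + 1) * C = t + (a * x1 + x2) := by rw [ht, hC]; ring
      linarith [Nat.zero_le (a * x1 + x2)]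
    have e : a ^ 2 * (x0 + h * C) + d * t = a ^ 2 * M + d * N := hx.symm.trans hFn
    -- congruence modulo a^2
    have h1 : (a ^ 2 * (x0 + h * C) + d * t) % a ^ 2 = d * t % a ^ 2 :=
      Nat.mul_add_mod _ _ _
    have h2 : (a ^ 2 * M + d * N) % a ^ 2 = d * N % a ^ 2 := Nat.mul_add_mod _ _ _
    have hmod : d * t ≡ d * N [MOD a ^ 2] := by
      show d * t % a ^ 2 = d * N % a ^ 2
      rw [← h1, e, h2]
    have htN : t % a ^ 2 = N := by
      have hc := Nat.ModEq.cancel_left_of_coprime (Nat.Coprime.pow_left 2 had) hmod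
      rwa [Nat.ModEq, Nat.mod_eq_of_lt (by omega : N < a ^ 2)] at hc
    have htge : N ≤ t := by
      have := Nat.div_add_mod t (a ^ 2)
      rw [htN] at this
      linarith [Nat.zero_le (a ^ 2 * (t / a ^ 2))]
    -- hence x0 + h*C ≤ M
    have hdtN : d * N ≤ d * t := Nat.mul_le_mul_left d htge
    have e2 : x0 + h * C ≤ M := by
      have h5 : a ^ 2 * (x0 + h * C) ≤ a ^ 2 * M := by linarith
      exact Nat.le_of_mul_le_mul_left h5 hA2
    -- and b ≤ C
    have hCb : b ≤ C := by
      have h4 : (a + 1) * b ≤ (a + 1) * C := by omega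
      exact Nat.le_of_mul_le_mul_left h4 (by omega)
    have h6 : h * b ≤ h * C := Nat.mul_le_mul_left h hCb
    -- contradiction : M + 1 = h*b ≤ h*C ≤ x0 + h*C ≤ M
    omega
  -- Part B: every m > Fn is representable
  have partB : ∀ m : ℕ, Fn < m → IsRepresentable
      ![a ^ 2, h * a ^ 2 + d, h * a ^ 2 + a * d, h * a ^ 2 + (a + 1) * d] m := by
    intro m hm
    rw [hrep]
    haveI : NeZero (a ^ 2) := ⟨by positivity⟩
    obtain ⟨t0, ht0lt, hmodeq⟩ : ∃ t0, t0 < a ^ 2 ∧ d * t0 ≡ m [MOD a ^ 2] := by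
      set U := ZMod.unitOfCoprime d hcop with hU
      refine ⟨(((U⁻¹ : (ZMod (a ^ 2))ˣ) : ZMod (a ^ 2)) * (m : ZMod (a ^ 2))).val,
        ZMod.val_lt _, ?_⟩
      refine (ZMod.natCast_eq_natCast_iff _ _ _).mp ?_
      push_cast
      rw [ZMod.natCast_val, ZMod.cast_id, ← mul_assoc,
        show ((d : ZMod (a ^ 2))) = (U : ZMod (a ^ 2)) from
          (ZMod.coe_unitOfCoprime d hcop).symm,
        ← Units.val_mul]
      simp
    have hdt0N : d * t0 ≤ d * N := Nat.mul_le_mul_left d (by omega)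
    have hdt0m : d * t0 < m := by
      have : d * N ≤ Fn := by rw [hFn]; linarith [Nat.zero_le (a ^ 2 * M)]
      omega
    obtain ⟨j, hj⟩ : a ^ 2 ∣ m - d * t0 := (Nat.modEq_iff_dvd' hdt0m.le).mp hmodeq
    have he : m = d * t0 + a ^ 2 * j := by
      rw [← hj]; exact (Nat.add_sub_cancel' hdt0m.le).symm
    -- coin decomposition of t0
    obtain ⟨x1, x2, x3, hcoin, hCle⟩ :
        ∃ x1 x2 x3 : ℕ, x1 + a * x2 + (a + 1) * x3 = t0 ∧ x1 + x2 + x3 ≤ b := by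
      obtain ⟨q, r, hq, hr⟩ : ∃ q r, a * q + r = t0 ∧ r < a :=
        ⟨t0 / a, t0 % a, Nat.div_add_mod t0 a, Nat.mod_lt _ ha0⟩
      have hqb : q ≤ b := by
        have h7 : a * q < a * a := by
          have : t0 < a * a := by rw [← pow_two]; exact ht0lt
          omega
        have := Nat.lt_of_mul_lt_mul_left h7
        omega
      rcases le_or_gt r q with hle | hlt
      · obtain ⟨e2, he2⟩ : ∃ e2, q = r + e2 :=
          ⟨_, (Nat.add_sub_cancel' hle).symm⟩
        exact ⟨0, e2, r, by rw [← hq, he2]; ring, by omega⟩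
      · obtain ⟨f, hf⟩ : ∃ f, r = q + f :=
          ⟨_, (Nat.add_sub_cancel' hlt.le).symm⟩
        exact ⟨f, 0, q, by rw [← hq, hf]; ring, by omega⟩
    -- enough room for the a² part
    have hjC : h * (x1 + x2 + x3) ≤ j := by
      by_contra hcon
      push_neg at hcon
      have i1 : a ^ 2 * (j + 1) ≤ a ^ 2 * (h * (x1 + x2 + x3)) :=
        Nat.mul_le_mul_left _ hcon
      have i2 : a ^ 2 * (h * (x1 + x2 + x3)) ≤ a ^ 2 * (h * b) :=
        Nat.mul_le_mul_left _ (Nat.mul_le_mul_left h hCle)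
      have r1 : a ^ 2 * (j + 1) = a ^ 2 * j + a ^ 2 := by ring
      have r2 : a ^ 2 * (h * b) = a ^ 2 * M + a ^ 2 := by rw [hM]; ring
      have : m + a ^ 2 ≤ Fn + a ^ 2 := by rw [hFn]; linarith
      omega
    obtain ⟨x0, hx0⟩ : ∃ x0, j = h * (x1 + x2 + x3) + x0 :=
      ⟨_, (Nat.add_sub_cancel' hjC).symm⟩
    refine ⟨x0, x1, x2, x3, ?_⟩
    rw [he, hx0, ← hcoin]; ring
  -- Assemble
  obtain ⟨hgmem, hub⟩ := hg
  have hge : Fn ≤ g := hub partA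
  have hle : g ≤ Fn := by
    by_contra hcon
    push_neg at hcon
    exact hgmem (partB g hcon)
  have hgFn : g = Fn := le_antisymm hle hge
  rw [hgFn, hFn]
  have hMz : (M : ℤ) = (h : ℤ) * b - 1 := by
    have := hM; push_cast [← this]; ring_nf; omega
  have hNz : (N : ℤ) = ((b : ℤ) + 1) ^ 2 - 1 := by
    have h8 : ((b : ℤ) + 1) ^ 2 = (N : ℤ) + 1 := by exact_mod_cast hN
    linarith
  have haz : ((a : ℕ) : ℤ) = (b : ℤ) + 1 := by rw [hadef]; push_cast; ring
  push_cast
  rw [haz]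
  linear_combination ((b : ℤ) + 1) ^ 2 * hMz + (d : ℤ) * hNz
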